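/- In the symmetric group on {1,…,60}, let σ₀ = (1,6)(10,11)(5,15)(2,21)(3,16)(4,43)(7,22)(8,27)(9,33)(12,34)(13,37)(14,42)(17,25)(23,26)(28,32)(35,36)(38,41)(20,44)(18,46)(24,47)(30,48)(29,52)(31,53)(40,54)(39,57)(45,58)(19,59)(50,60)(55,56)(49,51) and let σ₁ be the product of the twelve 5-cycles (5i+1, 5i+2, 5i+3, 5i+4, 5i+5) for i = 0,…,11. Then σ₀ is a fixed-point-free involution, σ₁⁵ = 1, and the subgroup generated by σ₀ and σ₁ acts transitively on {1,…,60}. -/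

import Mathlib

set_option maxRecDepth 100000


/-- Permutation representation for the icosahedron (H5, 60 darts): σ₀ is a fixed-point-free involution
on {1,…,60}, σ₁^5 = 1, and the subgroup generated by σ₀ and σ₁ acts transitively on
{1,…,60}. -/
theorem icosahedron_permutation_representation (σ₀ σ₁ : Equiv.Perm ℕ)
    (hσ₀ : σ₀ = Equiv.swap 1 6 *
      Equiv.swap 10 11 *
      Equiv.swap 5 15 *
      Equiv.swap 2 21 *
      Equiv.swap 3 16 *
      Equiv.swap 4 43 *
      Equiv.swap 7 22 *
      Equiv.swap 8 27 *
      Equiv.swap 9 33 *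
      Equiv.swap 12 34 *
      Equiv.swap 13 37 *
      Equiv.swap 14 42 *
      Equiv.swap 17 25 *
      Equiv.swap 23 26 *
      Equiv.swap 28 32 *
      Equiv.swap 35 36 *
      Equiv.swap 38 41 *
      Equiv.swap 20 44 *
      Equiv.swap 18 46 *
      Equiv.swap 24 47 *
      Equiv.swap 30 48 *
      Equiv.swap 29 52 *
      Equiv.swap 31 53 *
      Equiv.swap 40 54 *
      Equiv.swap 39 57 *
      Equiv.swap 45 58 *
      Equiv.swap 19 59 *
      Equiv.swap 50 60 *
      Equiv.swap 55 56 *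
      Equiv.swap 49 51)
    (hσ₁ : σ₁ = ([1, 2, 3, 4, 5] : List ℕ).formPerm *
      ([6, 7, 8, 9, 10] : List ℕ).formPerm *
      ([11, 12, 13, 14, 15] : List ℕ).formPerm *
      ([16, 17, 18, 19, 20] : List ℕ).formPerm *
      ([21, 22, 23, 24, 25] : List ℕ).formPerm *
      ([26, 27, 28, 29, 30] : List ℕ).formPerm *
      ([31, 32, 33, 34, 35] : List ℕ).formPerm *
      ([36, 37, 38, 39, 40] : List ℕ).formPerm *
      ([41, 42, 43, 44, 45] : List ℕ).formPerm *
      ([46, 47, 48, 49, 50] : List ℕ).formPerm *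
      ([51, 52, 53, 54, 55] : List ℕ).formPerm *
      ([56, 57, 58, 59, 60] : List ℕ).formPerm) :
    σ₀ * σ₀ = 1 ∧ (∀ x ∈ Finset.Icc 1 60, σ₀ x ≠ x) ∧ σ₁ ^ 5 = 1 ∧
    ∀ a ∈ Finset.Icc 1 60, ∀ b ∈ Finset.Icc 1 60,
      ∃ g ∈ Subgroup.closure ({σ₀, σ₁} : Set (Equiv.Perm ℕ)), g a = b := by
  subst hσ₀ hσ₁
  set σ₀ := (Equiv.swap 1 6 * Equiv.swap 10 11 * Equiv.swap 5 15 * Equiv.swap 2 21 * Equiv.swap 3 16 * Equiv.swap 4 43 * Equiv.swap 7 22 * Equiv.swap 8 27 * Equiv.swap 9 33 * Equiv.swap 12 34 * Equiv.swap 13 37 * Equiv.swap 14 42 * Equiv.swap 17 25 * Equiv.swap 23 26 * Equiv.swap 28 32 * Equiv.swap 35 36 * Equiv.swap 38 41 * Equiv.swap 20 44 * Equiv.swap 18 46 * Equiv.swap 24 47 * Equiv.swap 30 48 * Equiv.swap 29 52 * Equiv.swap 31 53 * Equiv.swap 40 54 * Equiv.swap 39 57 * Equiv.swap 45 58 * Equiv.swap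 19 59 * Equiv.swap 50 60 * Equiv.swap 55 56 * Equiv.swap 49 51 : Equiv.Perm ℕ) with hσ₀
  set σ₁ := (([1, 2, 3, 4, 5] : List ℕ).formPerm * ([6, 7, 8, 9, 10] : List ℕ).formPerm * ([11, 12, 13, 14, 15] : List ℕ).formPerm * ([16, 17, 18, 19, 20] : List ℕ).formPerm * ([21, 22, 23, 24, 25] : List ℕ).formPerm * ([26, 27, 28, 29, 30] : List ℕ).formPerm * ([31, 32, 33, 34, 35] : List ℕ).formPerm * ([36, 37, 38, 39, 40] : List ℕ).formPerm * ([41, 42, 43, 44, 45] : List ℕ).formPerm * ([46, 47, 48, 49, 50] : List ℕ).formPerm * ([51, 52, 53, 54, 55] : List ℕ).formPerm * ([56, 57, 58, 59, 60] : List ℕ).formPerm : Equiv.Perm ℕ) with hσ₁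
  have fix0 : ∀ n : ℕ, ¬(1 ≤ n ∧ n ≤ 60) → σ₀ n = n := by
    intro n hn
    rw [hσ₀]
    simp only [Equiv.Perm.mul_apply]
    rw [Equiv.swap_apply_of_ne_of_ne (show n ≠ 49 by omega) (show n ≠ 51 by omega)]
    rw [Equiv.swap_apply_of_ne_of_ne (show n ≠ 55 by omega) (show n ≠ 56 by omega)]
    rw [Equiv.swap_apply_of_ne_of_ne (show n ≠ 50 by omega) (show n ≠ 60 by omega)]
    rw [Equiv.swap_apply_of_ne_of_ne (show n ≠ 19 by omega) (show n ≠ 59 by omega)]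
    rw [Equiv.swap_apply_of_ne_of_ne (show n ≠ 45 by omega) (show n ≠ 58 by omega)]
    rw [Equiv.swap_apply_of_ne_of_ne (show n ≠ 39 by omega) (show n ≠ 57 by omega)]
    rw [Equiv.swap_apply_of_ne_of_ne (show n ≠ 40 by omega) (show n ≠ 54 by omega)]
    rw [Equiv.swap_apply_of_ne_of_ne (show n ≠ 31 by omega) (show n ≠ 53 by omega)]
    rw [Equiv.swap_apply_of_ne_of_ne (show n ≠ 29 by omega) (show n ≠ 52 by omega)]
    rw [Equiv.swap_apply_of_ne_of_ne (show n ≠ 30 by omega) (show n ≠ 48 by omega)]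
    rw [Equiv.swap_apply_of_ne_of_ne (show n ≠ 24 by omega) (show n ≠ 47 by omega)]
    rw [Equiv.swap_apply_of_ne_of_ne (show n ≠ 18 by omega) (show n ≠ 46 by omega)]
    rw [Equiv.swap_apply_of_ne_of_ne (show n ≠ 20 by omega) (show n ≠ 44 by omega)]
    rw [Equiv.swap_apply_of_ne_of_ne (show n ≠ 38 by omega) (show n ≠ 41 by omega)]
    rw [Equiv.swap_apply_of_ne_of_ne (show n ≠ 35 by omega) (show n ≠ 36 by omega)]
    rw [Equiv.swap_apply_of_ne_of_ne (show n ≠ 28 by omega) (show n ≠ 32 by omega)]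
    rw [Equiv.swap_apply_of_ne_of_ne (show n ≠ 23 by omega) (show n ≠ 26 by omega)]
    rw [Equiv.swap_apply_of_ne_of_ne (show n ≠ 17 by omega) (show n ≠ 25 by omega)]
    rw [Equiv.swap_apply_of_ne_of_ne (show n ≠ 14 by omega) (show n ≠ 42 by omega)]
    rw [Equiv.swap_apply_of_ne_of_ne (show n ≠ 13 by omega) (show n ≠ 37 by omega)]
    rw [Equiv.swap_apply_of_ne_of_ne (show n ≠ 12 by omega) (show n ≠ 34 by omega)]
    rw [Equiv.swap_apply_of_ne_of_ne (show n ≠ 9 by omega) (show n ≠ 33 by omega)]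
    rw [Equiv.swap_apply_of_ne_of_ne (show n ≠ 8 by omega) (show n ≠ 27 by omega)]
    rw [Equiv.swap_apply_of_ne_of_ne (show n ≠ 7 by omega) (show n ≠ 22 by omega)]
    rw [Equiv.swap_apply_of_ne_of_ne (show n ≠ 4 by omega) (show n ≠ 43 by omega)]
    rw [Equiv.swap_apply_of_ne_of_ne (show n ≠ 3 by omega) (show n ≠ 16 by omega)]
    rw [Equiv.swap_apply_of_ne_of_ne (show n ≠ 2 by omega) (show n ≠ 21 by omega)]
    rw [Equiv.swap_apply_of_ne_of_ne (show n ≠ 5 by omega) (show n ≠ 15 by omega)]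
    rw [Equiv.swap_apply_of_ne_of_ne (show n ≠ 10 by omega) (show n ≠ 11 by omega)]
    rw [Equiv.swap_apply_of_ne_of_ne (show n ≠ 1 by omega) (show n ≠ 6 by omega)]
  have fix1 : ∀ n : ℕ, ¬(1 ≤ n ∧ n ≤ 60) → σ₁ n = n := by
    intro n hn
    rw [hσ₁]
    simp only [Equiv.Perm.mul_apply]
    rw [List.formPerm_apply_of_notMem (l := [56, 57, 58, 59, 60]) (by simp; omega)]
    rw [List.formPerm_apply_of_notMem (l := [51, 52, 53, 54, 55]) (by simp; omega)]
    rw [List.formPerm_apply_of_notMem (l := [46, 47, 48, 49, 50]) (by simp; omega)]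
    rw [List.formPerm_apply_of_notMem (l := [41, 42, 43, 44, 45]) (by simp; omega)]
    rw [List.formPerm_apply_of_notMem (l := [36, 37, 38, 39, 40]) (by simp; omega)]
    rw [List.formPerm_apply_of_notMem (l := [31, 32, 33, 34, 35]) (by simp; omega)]
    rw [List.formPerm_apply_of_notMem (l := [26, 27, 28, 29, 30]) (by simp; omega)]
    rw [List.formPerm_apply_of_notMem (l := [21, 22, 23, 24, 25]) (by simp; omega)]
    rw [List.formPerm_apply_of_notMem (l := [16, 17, 18, 19, 20]) (by simp; omega)]
    rw [List.formPerm_apply_of_notMem (l := [11, 12, 13, 14, 15]) (by simp; omega)]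
    rw [List.formPerm_apply_of_notMem (l := [6, 7, 8, 9, 10]) (by simp; omega)]
    rw [List.formPerm_apply_of_notMem (l := [1, 2, 3, 4, 5]) (by simp; omega)]
  refine ⟨?_, ?_, ?_, ?_⟩
  · ext x
    by_cases h : 1 ≤ x ∧ x ≤ 60
    · obtain ⟨h1, h2⟩ := h
      interval_cases x <;> decide
    · simp [Equiv.Perm.mul_apply, fix0 x h]
  · intro x hx
    rw [Finset.mem_Icc] at hx
    obtain ⟨h1, h2⟩ := hx
    interval_cases x <;> decide
  · ext x
    by_cases h : 1 ≤ x ∧ x ≤ 60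
    · obtain ⟨h1, h2⟩ := h
      interval_cases x <;> decide
    · simp [pow_succ, Equiv.Perm.mul_apply, fix1 x h]
  set S := Subgroup.closure ({σ₀, σ₁} : Set (Equiv.Perm ℕ)) with hS
  have hs0 : σ₀ ∈ S := Subgroup.subset_closure (Or.inl rfl)
  have hs1 : σ₁ ∈ S := Subgroup.subset_closure (Or.inr rfl)
  have step0 : ∀ a b : ℕ, (∃ g ∈ S, g 1 = a) → σ₀ a = b → ∃ g ∈ S, g 1 = b := by
    rintro a b ⟨g, hg, ha⟩ hb
    exact ⟨σ₀ * g, S.mul_mem hs0 hg, by rw [Equiv.Perm.mul_apply, ha, hb]⟩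
  have step1 : ∀ a b : ℕ, (∃ g ∈ S, g 1 = a) → σ₁ a = b → ∃ g ∈ S, g 1 = b := by
    rintro a b ⟨g, hg, ha⟩ hb
    exact ⟨σ₁ * g, S.mul_mem hs1 hg, by rw [Equiv.Perm.mul_apply, ha, hb]⟩
  have r1 : ∃ g ∈ S, g 1 = 1 := ⟨1, S.one_mem, rfl⟩
  have r6 : ∃ g ∈ S, g 1 = 6 := step0 1 6 r1 (by decide)
  have r2 : ∃ g ∈ S, g 1 = 2 := step1 1 2 r1 (by decide)
  have r7 : ∃ g ∈ S, g 1 = 7 := step1 6 7 r6 (by decide)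
  have r21 : ∃ g ∈ S, g 1 = 21 := step0 2 21 r2 (by decide)
  have r3 : ∃ g ∈ S, g 1 = 3 := step1 2 3 r2 (by decide)
  have r22 : ∃ g ∈ S, g 1 = 22 := step0 7 22 r7 (by decide)
  have r8 : ∃ g ∈ S, g 1 = 8 := step1 7 8 r7 (by decide)
  have r16 : ∃ g ∈ S, g 1 = 16 := step0 3 16 r3 (by decide)
  have r4 : ∃ g ∈ S, g 1 = 4 := step1 3 4 r3 (by decide)
  have r23 : ∃ g ∈ S, g 1 = 23 := step1 22 23 r22 (by decide)
  have r27 : ∃ g ∈ S, g 1 = 27 := step0 8 27 r8 (by decide)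
  have r9 : ∃ g ∈ S, g 1 = 9 := step1 8 9 r8 (by decide)
  have r17 : ∃ g ∈ S, g 1 = 17 := step1 16 17 r16 (by decide)
  have r43 : ∃ g ∈ S, g 1 = 43 := step0 4 43 r4 (by decide)
  have r5 : ∃ g ∈ S, g 1 = 5 := step1 4 5 r4 (by decide)
  have r26 : ∃ g ∈ S, g 1 = 26 := step0 23 26 r23 (by decide)
  have r24 : ∃ g ∈ S, g 1 = 24 := step1 23 24 r23 (by decide)
  have r28 : ∃ g ∈ S, g 1 = 28 := step1 27 28 r27 (by decide)
  have r33 : ∃ g ∈ S, g 1 = 33 := step0 9 33 r9 (by decide)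
  have r10 : ∃ g ∈ S, g 1 = 10 := step1 9 10 r9 (by decide)
  have r25 : ∃ g ∈ S, g 1 = 25 := step0 17 25 r17 (by decide)
  have r18 : ∃ g ∈ S, g 1 = 18 := step1 17 18 r17 (by decide)
  have r44 : ∃ g ∈ S, g 1 = 44 := step1 43 44 r43 (by decide)
  have r15 : ∃ g ∈ S, g 1 = 15 := step0 5 15 r5 (by decide)
  have r47 : ∃ g ∈ S, g 1 = 47 := step0 24 47 r24 (by decide)
  have r32 : ∃ g ∈ S, g 1 = 32 := step0 28 32 r28 (by decide)
  have r29 : ∃ g ∈ S, g 1 = 29 := step1 28 29 r28 (by decide)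
  have r34 : ∃ g ∈ S, g 1 = 34 := step1 33 34 r33 (by decide)
  have r11 : ∃ g ∈ S, g 1 = 11 := step0 10 11 r10 (by decide)
  have r46 : ∃ g ∈ S, g 1 = 46 := step0 18 46 r18 (by decide)
  have r19 : ∃ g ∈ S, g 1 = 19 := step1 18 19 r18 (by decide)
  have r20 : ∃ g ∈ S, g 1 = 20 := step0 44 20 r44 (by decide)
  have r45 : ∃ g ∈ S, g 1 = 45 := step1 44 45 r44 (by decide)
  have r48 : ∃ g ∈ S, g 1 = 48 := step1 47 48 r47 (by decide)
  have r52 : ∃ g ∈ S, g 1 = 52 := step0 29 52 r29 (by decide)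
  have r30 : ∃ g ∈ S, g 1 = 30 := step1 29 30 r29 (by decide)
  have r12 : ∃ g ∈ S, g 1 = 12 := step0 34 12 r34 (by decide)
  have r35 : ∃ g ∈ S, g 1 = 35 := step1 34 35 r34 (by decide)
  have r59 : ∃ g ∈ S, g 1 = 59 := step0 19 59 r19 (by decide)
  have r58 : ∃ g ∈ S, g 1 = 58 := step0 45 58 r45 (by decide)
  have r41 : ∃ g ∈ S, g 1 = 41 := step1 45 41 r45 (by decide)
  have r49 : ∃ g ∈ S, g 1 = 49 := step1 48 49 r48 (by decide)
  have r53 : ∃ g ∈ S, g 1 = 53 := step1 52 53 r52 (by decide)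
  have r13 : ∃ g ∈ S, g 1 = 13 := step1 12 13 r12 (by decide)
  have r36 : ∃ g ∈ S, g 1 = 36 := step0 35 36 r35 (by decide)
  have r31 : ∃ g ∈ S, g 1 = 31 := step1 35 31 r35 (by decide)
  have r60 : ∃ g ∈ S, g 1 = 60 := step1 59 60 r59 (by decide)
  have r38 : ∃ g ∈ S, g 1 = 38 := step0 41 38 r41 (by decide)
  have r42 : ∃ g ∈ S, g 1 = 42 := step1 41 42 r41 (by decide)
  have r51 : ∃ g ∈ S, g 1 = 51 := step0 49 51 r49 (by decide)
  have r50 : ∃ g ∈ S, g 1 = 50 := step1 49 50 r49 (by decide)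
  have r54 : ∃ g ∈ S, g 1 = 54 := step1 53 54 r53 (by decide)
  have r37 : ∃ g ∈ S, g 1 = 37 := step0 13 37 r13 (by decide)
  have r14 : ∃ g ∈ S, g 1 = 14 := step1 13 14 r13 (by decide)
  have r56 : ∃ g ∈ S, g 1 = 56 := step1 60 56 r60 (by decide)
  have r39 : ∃ g ∈ S, g 1 = 39 := step1 38 39 r38 (by decide)
  have r40 : ∃ g ∈ S, g 1 = 40 := step0 54 40 r54 (by decide)
  have r55 : ∃ g ∈ S, g 1 = 55 := step1 54 55 r54 (by decide)
  have r57 : ∃ g ∈ S, g 1 = 57 := step1 56 57 r56 (by decide)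

  have key : ∀ a ∈ Finset.Icc 1 60, ∃ g ∈ S, g 1 = a := by
    intro a ha
    rw [Finset.mem_Icc] at ha
    obtain ⟨h1, h2⟩ := ha
    interval_cases a <;> assumption
  intro a ha b hb
  obtain ⟨ga, hga, ha1⟩ := key a ha
  obtain ⟨gb, hgb, hb1⟩ := key b hb
  refine ⟨gb * ga⁻¹, S.mul_mem hgb (S.inv_mem hga), ?_⟩
  rw [Equiv.Perm.mul_apply, ← ha1, Equiv.Perm.inv_def, Equiv.symm_apply_apply, hb1]
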